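/- For every real a > 0, the integral from 0 to 1 of z^(2a−1)·(1−z)^2/((1+z^2)·(−ln z)) dz equals 2·ln(√2·Γ(a/2 + 3/4)/(√a·Γ(a/2 + 1/4))). -/

import Mathlib

open MeasureTheory Set Filter Topology

lemma frullani_inner {z : ℝ} (hz0 : 0 < z) (hz1 : z < 1) {p q : ℝ} (hpq : p < q) :
    ∫ s in Set.Ioc p q, z ^ (s - 1) = (z ^ (p - 1) - z ^ (q - 1)) / (-Real.log z) := by
  have hlog : Real.log z < 0 := Real.log_neg hz0 hz1
  have hcont : Continuous fun s : ℝ => z ^ (s - 1) := by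
    have : (fun s : ℝ => z ^ (s - 1)) = fun s => Real.exp (Real.log z * (s - 1)) := by
      funext s; rw [Real.rpow_def_of_pos hz0]
    rw [this]
    exact Real.continuous_exp.comp (continuous_const.mul (continuous_id.sub continuous_const))
  have key : ∀ s ∈ Set.uIcc p q, HasDerivAt (fun s => z ^ (s - 1) / Real.log z) (z ^ (s - 1)) s := by
    intro s _
    have h0 := (Real.hasStrictDerivAt_const_rpow hz0 (s - 1)).hasDerivAt
    have h1 : HasDerivAt (fun s : ℝ => z ^ (s - 1)) (z ^ (s - 1) * Real.log z) s := by
      have := h0.comp s ((hasDerivAt_id s).sub_const 1)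
      simpa [Function.comp_def] using this
    have := h1.div_const (Real.log z)
    simpa [mul_div_assoc, mul_div_cancel_right₀ _ hlog.ne] using this
  rw [← intervalIntegral.integral_of_le hpq.le,
    intervalIntegral.integral_eq_sub_of_hasDerivAt key (hcont.intervalIntegrable p q)]
  rw [div_sub_div_same, div_neg, ← neg_div, neg_sub]

lemma frullani_lintegral {p q : ℝ} (hp : 0 < p) (hpq : p < q) :
    ∫⁻ z in Set.Ioo (0:ℝ) 1, ENNReal.ofReal ((z ^ (p - 1) - z ^ (q - 1)) / (-Real.log z)) =
      ENNReal.ofReal (Real.log (q / p)) := by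
  have hmeas : AEMeasurable (Function.uncurry fun z s : ℝ => ENNReal.ofReal (z ^ (s - 1)))
      ((volume.restrict (Set.Ioo (0:ℝ) 1)).prod (volume.restrict (Set.Ioc p q))) := by
    refine ⟨fun zs => ENNReal.ofReal (Real.exp ((zs.2 - 1) * Real.log zs.1)), ?_, ?_⟩
    · exact (Real.measurable_exp.comp
        ((measurable_snd.sub measurable_const).mul (Real.measurable_log.comp measurable_fst))).ennreal_ofReal
    · rw [Measure.prod_restrict]
      filter_upwards [ae_restrict_mem (measurableSet_Ioo.prod measurableSet_Ioc)] with zs hzs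
      simp only [Function.uncurry]
      rw [Real.rpow_def_of_pos hzs.1.1, mul_comm]
  calc ∫⁻ z in Set.Ioo (0:ℝ) 1, ENNReal.ofReal ((z ^ (p - 1) - z ^ (q - 1)) / (-Real.log z))
      = ∫⁻ z in Set.Ioo (0:ℝ) 1, ∫⁻ s in Set.Ioc p q, ENNReal.ofReal (z ^ (s - 1)) := by
        refine lintegral_congr_ae ?_
        filter_upwards [ae_restrict_mem measurableSet_Ioo] with z hz
        have hcont : Continuous fun s : ℝ => z ^ (s - 1) := by
          have : (fun s : ℝ => z ^ (s - 1)) = fun s => Real.exp (Real.log z * (s - 1)) := by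
            funext s; rw [Real.rpow_def_of_pos hz.1]
          rw [this]
          exact Real.continuous_exp.comp (continuous_const.mul (continuous_id.sub continuous_const))
        rw [← frullani_inner hz.1 hz.2 hpq,
          ← ofReal_integral_eq_lintegral_ofReal (hcont.integrableOn_Ioc)]
        exact Filter.Eventually.of_forall fun s => Real.rpow_nonneg hz.1.le _
    _ = ∫⁻ s in Set.Ioc p q, ∫⁻ z in Set.Ioo (0:ℝ) 1, ENNReal.ofReal (z ^ (s - 1)) :=
        lintegral_lintegral_swap hmeas
    _ = ∫⁻ s in Set.Ioc p q, ENNReal.ofReal (1 / s) := by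
        refine setLIntegral_congr_fun measurableSet_Ioc ?_
        intro s hs
        beta_reduce
        have hs0 : 0 < s := hp.trans hs.1
        have hint : IntegrableOn (fun z : ℝ => z ^ (s - 1)) (Set.Ioo 0 1) := by
          have := (intervalIntegral.intervalIntegrable_rpow' (r := s - 1) (by linarith)
            (a := 0) (b := 1))
          rw [intervalIntegrable_iff_integrableOn_Ioc_of_le (by norm_num)] at this
          exact this.mono_set Set.Ioo_subset_Ioc_self
        rw [← ofReal_integral_eq_lintegral_ofReal hint]
        · congr 1
          rw [← integral_Ioc_eq_integral_Ioo, ← intervalIntegral.integral_of_le (by norm_num : (0:ℝ) ≤ 1),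
            integral_rpow (Or.inl (by linarith))]
          rw [Real.one_rpow, Real.zero_rpow (by linarith), sub_add_cancel]
          norm_num
        · filter_upwards [ae_restrict_mem measurableSet_Ioo] with z hz
          exact Real.rpow_nonneg hz.1.le _
    _ = ENNReal.ofReal (Real.log (q / p)) := by
        have hne : ∀ x ∈ Set.uIcc p q, x ≠ 0 := by
          intro x hx
          have hx' : x ∈ Set.Icc p q := Set.uIcc_of_le hpq.le ▸ hx
          exact (hp.trans_le hx'.1).ne'
        have h0 : (0:ℝ) ∉ Set.uIcc p q := fun h => (hne 0 h) rfl
        have hint : IntegrableOn (fun s : ℝ => 1 / s) (Set.Ioc p q) := by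
          have := intervalIntegral.intervalIntegrable_one_div (μ := volume) (a := p) (b := q) (f := fun s : ℝ => s)
            (fun x hx => hne x hx) continuousOn_id
          rwa [intervalIntegrable_iff_integrableOn_Ioc_of_le hpq.le] at this
        rw [← ofReal_integral_eq_lintegral_ofReal hint]
        · rw [← intervalIntegral.integral_of_le hpq.le, integral_one_div h0]
        · filter_upwards [ae_restrict_mem measurableSet_Ioc] with s hs
          exact one_div_nonneg.mpr (hp.trans hs.1).le

lemma frullani_nonneg {p q : ℝ} (hpq : p ≤ q) {z : ℝ} (hz : z ∈ Set.Ioo (0:ℝ) 1) :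
    0 ≤ (z ^ (p - 1) - z ^ (q - 1)) / (-Real.log z) := by
  have hlog : Real.log z < 0 := Real.log_neg hz.1 hz.2
  have h1 : z ^ (q - 1) ≤ z ^ (p - 1) :=
    Real.rpow_le_rpow_of_exponent_ge hz.1 hz.2.le (by linarith)
  have h2 := sub_nonneg.mpr h1
  have h3 : (0:ℝ) < -Real.log z := by linarith
  positivity

lemma frullani_meas (p q : ℝ) :
    Measurable fun z : ℝ => (z ^ (p - 1) - z ^ (q - 1)) / (-Real.log z) := by
  measurability

lemma frullani_integrable {p q : ℝ} (hp : 0 < p) (hpq : p < q) :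
    IntegrableOn (fun z : ℝ => (z ^ (p - 1) - z ^ (q - 1)) / (-Real.log z))
      (Set.Ioo (0:ℝ) 1) := by
  have hnn : 0 ≤ᵐ[volume.restrict (Set.Ioo (0:ℝ) 1)]
      fun z => (z ^ (p - 1) - z ^ (q - 1)) / (-Real.log z) := by
    filter_upwards [ae_restrict_mem measurableSet_Ioo] with z hz
    exact frullani_nonneg hpq.le hz
  refine ⟨(frullani_meas p q).aestronglyMeasurable, ?_⟩
  rw [hasFiniteIntegral_iff_ofReal hnn, frullani_lintegral hp hpq]
  exact ENNReal.ofReal_lt_top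

lemma frullani_integral {p q : ℝ} (hp : 0 < p) (hpq : p < q) :
    ∫ z in Set.Ioo (0:ℝ) 1, (z ^ (p - 1) - z ^ (q - 1)) / (-Real.log z) =
      Real.log (q / p) := by
  have hnn : 0 ≤ᵐ[volume.restrict (Set.Ioo (0:ℝ) 1)]
      fun z => (z ^ (p - 1) - z ^ (q - 1)) / (-Real.log z) := by
    filter_upwards [ae_restrict_mem measurableSet_Ioo] with z hz
    exact frullani_nonneg hpq.le hz
  rw [integral_eq_lintegral_of_nonneg_ae hnn (frullani_meas p q).aestronglyMeasurable,
    frullani_lintegral hp hpq, ENNReal.toReal_ofReal]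
  exact Real.log_nonneg ((one_le_div hp).mpr hpq.le)

noncomputable def Ffun (c : ℝ) (z : ℝ) : ℝ :=
  z ^ (c - 1) * (1 - z) ^ 2 * (1 - z ^ 2) / (-Real.log z)

lemma Ffun_eq {c : ℝ} {z : ℝ} (hz : z ∈ Set.Ioo (0:ℝ) 1) :
    Ffun c z = (z ^ (c - 1) - z ^ (c + 1 - 1)) / (-Real.log z)
      - (z ^ (c + 1 - 1) - z ^ (c + 3 - 1)) / (-Real.log z)
      + (z ^ (c + 3 - 1) - z ^ (c + 4 - 1)) / (-Real.log z) := by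
  have hz0 := hz.1
  have key : ∀ k : ℕ, z ^ (c - 1 + k) = z ^ (c - 1) * z ^ k := fun k => by
    rw [Real.rpow_add hz0, Real.rpow_natCast]
  have h1 : z ^ (c + 1 - 1) = z ^ (c - 1) * z ^ (1:ℕ) := by
    rw [← key]; congr 1; push_cast; ring
  have h2 : z ^ (c + 3 - 1) = z ^ (c - 1) * z ^ (3:ℕ) := by
    rw [← key]; congr 1; push_cast; ring
  have h3 : z ^ (c + 4 - 1) = z ^ (c - 1) * z ^ (4:ℕ) := by
    rw [← key]; congr 1; push_cast; ring
  rw [Ffun, ← sub_div, ← add_div, h1, h2, h3]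
  congr 1
  ring

lemma Ffun_nonneg {c : ℝ} {z : ℝ} (hz : z ∈ Set.Ioo (0:ℝ) 1) : 0 ≤ Ffun c z := by
  have hlog : Real.log z < 0 := Real.log_neg hz.1 hz.2
  have h3 : (0:ℝ) < -Real.log z := by linarith
  have h4 : (0:ℝ) ≤ z ^ (c-1) := Real.rpow_nonneg hz.1.le _
  have h5 : z ^ 2 < 1 := by nlinarith [hz.1, hz.2]
  have h6 : (0:ℝ) ≤ 1 - z ^ 2 := by linarith
  rw [Ffun]
  positivity

lemma Ffun_integrable {c : ℝ} (hc : 0 < c) : IntegrableOn (Ffun c) (Set.Ioo (0:ℝ) 1) := by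
  have h := ((frullani_integrable hc (by linarith : c < c + 1)).sub
      (frullani_integrable (by linarith : (0:ℝ) < c + 1) (by linarith : c + 1 < c + 3))).add
    (frullani_integrable (by linarith : (0:ℝ) < c + 3) (by linarith : c + 3 < c + 4))
  have h' : IntegrableOn (fun z : ℝ => (z ^ (c - 1) - z ^ (c + 1 - 1)) / (-Real.log z)
      - (z ^ (c + 1 - 1) - z ^ (c + 3 - 1)) / (-Real.log z)
      + (z ^ (c + 3 - 1) - z ^ (c + 4 - 1)) / (-Real.log z)) (Set.Ioo (0:ℝ) 1) := h
  exact h'.congr_fun (fun z hz => (Ffun_eq hz).symm) measurableSet_Ioo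

lemma Ffun_integral {c : ℝ} (hc : 0 < c) :
    ∫ z in Set.Ioo (0:ℝ) 1, Ffun c z =
      Real.log ((c + 1) / c) - Real.log ((c + 3) / (c + 1)) + Real.log ((c + 4) / (c + 3)) := by
  have i1 : IntegrableOn (fun z : ℝ => (z ^ (c - 1) - z ^ (c + 1 - 1)) / (-Real.log z)
      - (z ^ (c + 1 - 1) - z ^ (c + 3 - 1)) / (-Real.log z)) (Set.Ioo (0:ℝ) 1) :=
    (frullani_integrable hc (by linarith)).sub
      (frullani_integrable (by linarith) (by linarith))
  have i2 : IntegrableOn (fun z : ℝ => (z ^ (c + 3 - 1) - z ^ (c + 4 - 1)) / (-Real.log z))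
      (Set.Ioo (0:ℝ) 1) := frullani_integrable (by linarith) (by linarith)
  rw [setIntegral_congr_fun measurableSet_Ioo (fun z hz => Ffun_eq hz),
    integral_add i1 i2,
    integral_sub (frullani_integrable hc (by linarith))
      (frullani_integrable (by linarith) (by linarith)),
    frullani_integral hc (by linarith), frullani_integral (by linarith) (by linarith),
    frullani_integral (by linarith) (by linarith)]

noncomputable def Lterm (x : ℝ) (n : ℕ) : ℝ :=
  2 * Real.log (x + n + 1/4) - 2 * Real.log (x + n + 3/4)
    + (Real.log (x + n + 1) - Real.log (x + n))

lemma Lterm_eq {x : ℝ} (hx : 0 < x) (n : ℕ) :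
    Real.log ((4*(x+n) + 1) / (4*(x+n))) - Real.log ((4*(x+n) + 3) / (4*(x+n) + 1))
      + Real.log ((4*(x+n) + 4) / (4*(x+n) + 3)) = Lterm x n := by
  have hn : (0:ℝ) ≤ (n:ℝ) := Nat.cast_nonneg n
  have h0 : (0:ℝ) < x + n := by linarith
  have e1 : 4*(x+↑n) + 1 = 4*(x+↑n+1/4) := by ring
  have e2 : 4*(x+↑n) + 3 = 4*(x+↑n+3/4) := by ring
  have e3 : 4*(x+↑n) + 4 = 4*(x+↑n+1) := by ring
  rw [e1, e2, e3, Real.log_div (by positivity) (by positivity),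
    Real.log_div (by positivity) (by positivity),
    Real.log_div (by positivity) (by positivity),
    Real.log_mul (by norm_num) (by positivity), Real.log_mul (by norm_num) (by positivity),
    Real.log_mul (by norm_num) (by positivity), Real.log_mul (by norm_num) (by positivity)]
  rw [Lterm]
  ring

lemma sum_Lterm (x : ℝ) (n : ℕ) :
    ∑ k ∈ Finset.range (n+1), Lterm x k
      = 2*(Real.BohrMollerup.logGammaSeq (x+3/4) n - Real.BohrMollerup.logGammaSeq (x+1/4) n)
        + (Real.log (x+n+1) - Real.log n) - Real.log x := by
  have tele : ∑ k ∈ Finset.range (n+1), (Real.log (x+k+1) - Real.log (x+k))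
      = Real.log (x+n+1) - Real.log x := by
    have h := Finset.sum_range_sub (fun k : ℕ => Real.log (x+k)) (n+1)
    have h2 : ∑ k ∈ Finset.range (n+1), (Real.log (x+k+1) - Real.log (x+k))
        = ∑ k ∈ Finset.range (n+1), ((fun k : ℕ => Real.log (x+k)) (k+1)
          - (fun k : ℕ => Real.log (x+k)) k) := by
      refine Finset.sum_congr rfl fun k _ => ?_
      simp only []
      push_cast
      ring_nf
    rw [h2, h]
    push_cast
    ring_nf
  have e14 : ∑ m ∈ Finset.range (n+1), Real.log (x+1/4+m)
      = ∑ m ∈ Finset.range (n+1), Real.log (x+m+1/4) :=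
    Finset.sum_congr rfl fun m _ => by rw [add_right_comm]
  have e34 : ∑ m ∈ Finset.range (n+1), Real.log (x+3/4+m)
      = ∑ m ∈ Finset.range (n+1), Real.log (x+m+3/4) :=
    Finset.sum_congr rfl fun m _ => by rw [add_right_comm]
  simp only [Lterm, Real.BohrMollerup.logGammaSeq]
  rw [Finset.sum_add_distrib, tele, Finset.sum_sub_distrib, ← Finset.mul_sum, ← Finset.mul_sum,
    e14, e34]
  ring

open Filter Topology in
lemma tendsto_sum_Lterm {x : ℝ} (hx : 0 < x) :
    Tendsto (fun N => ∑ k ∈ Finset.range N, Lterm x k) atTop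
      (𝓝 (2*(Real.log (Real.Gamma (x+3/4)) - Real.log (Real.Gamma (x+1/4))) - Real.log x)) := by
  rw [← tendsto_add_atTop_iff_nat 1]
  have h1 := Real.BohrMollerup.tendsto_log_gamma (x := x+3/4) (by linarith)
  have h2 := Real.BohrMollerup.tendsto_log_gamma (x := x+1/4) (by linarith)
  have h3 : Tendsto (fun n : ℕ => Real.log (x+n+1) - Real.log n) atTop (𝓝 0) := by
    have hq : Tendsto (fun n : ℕ => (x+n+1)/n) atTop (𝓝 1) := by
      have h0 := (tendsto_const_div_atTop_nhds_zero_nat (x+1)).add_const 1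
      rw [zero_add] at h0
      refine h0.congr' ?_
      filter_upwards [eventually_ge_atTop 1] with n hn
      have hn' : (n:ℝ) ≠ 0 := Nat.cast_ne_zero.mpr (by omega)
      field_simp
      ring
    have hl : Tendsto (fun n : ℕ => Real.log ((x+n+1)/n)) atTop (𝓝 0) := by
      have := (Real.continuousAt_log (by norm_num : (1:ℝ) ≠ 0)).tendsto.comp hq
      rwa [Real.log_one] at this
    refine hl.congr' ?_
    filter_upwards [eventually_ge_atTop 1] with n hn
    have hn' : (n:ℝ) ≠ 0 := Nat.cast_ne_zero.mpr (by omega)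
    have hx1 : (0:ℝ) < x + n + 1 := by
      have : (0:ℝ) ≤ (n:ℝ) := Nat.cast_nonneg n
      linarith
    rw [Real.log_div hx1.ne' hn']
  have htot := (((h1.sub h2).const_mul 2).add h3).sub_const (Real.log x)
  rw [add_zero] at htot
  exact htot.congr fun n => (sum_Lterm x n).symm

lemma rpow_meas (c : ℝ) : Measurable fun z : ℝ => z ^ c := by measurability

lemma Ffun_meas (c : ℝ) : Measurable (Ffun c) := by
  unfold Ffun
  exact (((rpow_meas (c-1)).mul ((measurable_const.sub measurable_id).pow_const 2)).mul
    (measurable_const.sub (measurable_id.pow_const 2))).div Real.measurable_log.neg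

open Filter Topology in
theorem log_kernel_integral (a : ℝ) (ha : 0 < a) :
    ∫ z in Set.Ioo (0 : ℝ) 1,
        z ^ (2 * a - 1) * (1 - z) ^ 2 / ((1 + z ^ 2) * (-Real.log z)) =
      2 * Real.log (Real.sqrt 2 * Real.Gamma (a / 2 + 3 / 4) /
        (Real.sqrt a * Real.Gamma (a / 2 + 1 / 4))) := by
  have hx : 0 < a/2 := by linarith
  have hc : ∀ n : ℕ, (0:ℝ) < 2*a + 4*n := fun n => by positivity
  have hLint : ∀ n : ℕ, ∫ z in Set.Ioo (0:ℝ) 1, Ffun (2*a + 4*n) z = Lterm (a/2) n := by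
    intro n
    rw [Ffun_integral (hc n)]
    have e : 2*a + 4*(n:ℝ) = 4*(a/2 + n) := by ring
    rw [e]
    exact Lterm_eq hx n
  have hLnn : ∀ n, 0 ≤ Lterm (a/2) n := fun n => by
    rw [← hLint n]
    exact setIntegral_nonneg measurableSet_Ioo fun z hz => Ffun_nonneg hz
  have hhs : HasSum (Lterm (a/2))
      (2*(Real.log (Real.Gamma (a/2+3/4)) - Real.log (Real.Gamma (a/2+1/4))) - Real.log (a/2)) :=
    (hasSum_iff_tendsto_nat_of_nonneg hLnn _).mpr (tendsto_sum_Lterm hx)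
  have hpt : ∀ z ∈ Set.Ioo (0:ℝ) 1, HasSum (fun n : ℕ => Ffun (2*a + 4*n) z)
      (z ^ (2 * a - 1) * (1 - z) ^ 2 / ((1 + z ^ 2) * (-Real.log z))) := by
    intro z hz
    obtain ⟨hz0, hz1⟩ := hz
    have hz4 : z^4 < 1 := pow_lt_one₀ hz0.le hz1 (by norm_num)
    have hgeo := (hasSum_geometric_of_lt_one (by positivity) hz4).mul_right
      (z ^ (2*a - 1) * (1 - z)^2 * (1 - z^2) / (-Real.log z))
    have hfun : (fun n : ℕ => (z^4)^n * (z ^ (2*a-1) * (1-z)^2 * (1-z^2) / (-Real.log z)))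
        = fun n : ℕ => Ffun (2*a + 4*n) z := by
      funext n
      rw [Ffun]
      have e : 2*a + 4*(n:ℝ) - 1 = (2*a - 1) + ((4*n : ℕ) : ℝ) := by push_cast; ring
      rw [e, Real.rpow_add hz0, Real.rpow_natCast, pow_mul]
      ring
    rw [hfun] at hgeo
    convert hgeo using 1
    · rfl
    have hlog : Real.log z < 0 := Real.log_neg hz0 hz1
    have h3 : (0:ℝ) < -Real.log z := by linarith
    have h4 : (0:ℝ) < 1 - z^4 := by linarith
    have hd1 : (1 + z^2) * (-Real.log z) ≠ 0 := mul_ne_zero (by positivity) h3.ne'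
    have hd2 : (-Real.log z) * (1 - z^4) ≠ 0 := mul_ne_zero h3.ne' h4.ne' 
    rw [inv_mul_eq_div, div_div, div_eq_div_iff hd1 hd2]
    ring
  have hgnn : 0 ≤ᵐ[volume.restrict (Set.Ioo (0:ℝ) 1)]
      fun z => z ^ (2 * a - 1) * (1 - z) ^ 2 / ((1 + z ^ 2) * (-Real.log z)) := by
    filter_upwards [ae_restrict_mem measurableSet_Ioo] with z hz
    have hlog : Real.log z < 0 := Real.log_neg hz.1 hz.2
    have h3 : (0:ℝ) < -Real.log z := by linarith
    have h4 : (0:ℝ) ≤ z ^ (2*a-1) := Real.rpow_nonneg hz.1.le _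
    positivity
  have hmeasg : Measurable fun z : ℝ =>
      z ^ (2 * a - 1) * (1 - z) ^ 2 / ((1 + z ^ 2) * (-Real.log z)) :=
    ((rpow_meas (2*a-1)).mul ((measurable_const.sub measurable_id).pow_const 2)).div
      ((measurable_const.add (measurable_id.pow_const 2)).mul Real.measurable_log.neg)
  have hlint : ∫⁻ z in Set.Ioo (0:ℝ) 1,
      ENNReal.ofReal (z ^ (2 * a - 1) * (1 - z) ^ 2 / ((1 + z ^ 2) * (-Real.log z)))
      = ENNReal.ofReal
        (2*(Real.log (Real.Gamma (a/2+3/4)) - Real.log (Real.Gamma (a/2+1/4))) - Real.log (a/2)) := by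
    calc ∫⁻ z in Set.Ioo (0:ℝ) 1,
        ENNReal.ofReal (z ^ (2 * a - 1) * (1 - z) ^ 2 / ((1 + z ^ 2) * (-Real.log z)))
        = ∫⁻ z in Set.Ioo (0:ℝ) 1, ∑' n : ℕ, ENNReal.ofReal (Ffun (2*a + 4*n) z) := by
          refine lintegral_congr_ae ?_
          filter_upwards [ae_restrict_mem measurableSet_Ioo] with z hz
          rw [← (hpt z hz).tsum_eq,
            ENNReal.ofReal_tsum_of_nonneg (fun n => Ffun_nonneg hz) (hpt z hz).summable]
      _ = ∑' n : ℕ, ∫⁻ z in Set.Ioo (0:ℝ) 1, ENNReal.ofReal (Ffun (2*a + 4*n) z) :=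
          lintegral_tsum fun n => ((Ffun_meas _).ennreal_ofReal).aemeasurable
      _ = ∑' n : ℕ, ENNReal.ofReal (Lterm (a/2) n) := by
          refine tsum_congr fun n => ?_
          rw [← ofReal_integral_eq_lintegral_ofReal (Ffun_integrable (hc n)) ?_, hLint n]
          filter_upwards [ae_restrict_mem measurableSet_Ioo] with z hz
          exact Ffun_nonneg hz
      _ = ENNReal.ofReal
          (2*(Real.log (Real.Gamma (a/2+3/4)) - Real.log (Real.Gamma (a/2+1/4))) - Real.log (a/2)) := by
          rw [← ENNReal.ofReal_tsum_of_nonneg hLnn hhs.summable, hhs.tsum_eq]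
  rw [integral_eq_lintegral_of_nonneg_ae hgnn hmeasg.aestronglyMeasurable, hlint,
    ENNReal.toReal_ofReal (hhs.tsum_eq ▸ tsum_nonneg hLnn)]
  have hg3 : 0 < Real.Gamma (a/2+3/4) := Real.Gamma_pos_of_pos (by linarith)
  have hg1 : 0 < Real.Gamma (a/2+1/4) := Real.Gamma_pos_of_pos (by linarith)
  have hs2 : (0:ℝ) < Real.sqrt 2 := Real.sqrt_pos.mpr (by norm_num)
  have hsa : (0:ℝ) < Real.sqrt a := Real.sqrt_pos.mpr ha
  rw [Real.log_div (mul_pos hs2 hg3).ne' (mul_pos hsa hg1).ne', Real.log_mul hs2.ne' hg3.ne',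
    Real.log_mul hsa.ne' hg1.ne', Real.log_sqrt (by norm_num), Real.log_sqrt ha.le,
    Real.log_div ha.ne' (two_ne_zero)]
  ring
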